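/- Summation rule for the interpolation matrix: with F^{(M)}_{nm} defined as the kernel F^{(M)}_{nm} = (1/(aN)) ∑_{k=−(N−1)/2}^{(N−1)/2} exp(2πik(m − n/M)/N) for n ∈ {0,…,MN−1}, m ∈ {0,…,N−1}, one has (a/M) ∑_{n=0}^{MN−1} F^{(M)}_{n m₁} F^{(M)}_{n m₂} = (1/a) δ_{m₁ m₂} for all m₁, m₂ ∈ {0,…,N−1}. -/

import Mathlib

open Complex Finset

private lemma sum_neg_icc' (K : ℤ) (f : ℤ → ℂ) :
    ∑ k ∈ Finset.Icc (-K) K, f (-k) = ∑ k ∈ Finset.Icc (-K) K, f k := by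
  refine Finset.sum_equiv (Equiv.neg ℤ) (fun i => ?_) (fun i _ => rfl)
  simp only [Finset.mem_Icc, Equiv.neg_apply]
  omega

private lemma geom_exp' (L : ℕ) (hL : 0 < L) (j : ℤ) :
    ∑ n ∈ Finset.range L, Complex.exp ((j * n) * (2 * Real.pi * I) / L) =
      if (L : ℤ) ∣ j then (L : ℂ) else 0 := by
  have hL' : (L : ℂ) ≠ 0 := Nat.cast_ne_zero.2 hL.ne'
  by_cases h : (L : ℤ) ∣ j
  · obtain ⟨t, rfl⟩ := h
    rw [if_pos (Dvd.intro t rfl)]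
    rw [Finset.sum_congr rfl (fun n _ => ?_), Finset.sum_const, Finset.card_range,
      nsmul_eq_mul, mul_one]
    have he : (((L : ℤ) * t : ℤ) : ℂ) * n * (2 * Real.pi * I) / L
        = ((t * n : ℤ) : ℂ) * (2 * Real.pi * I) := by
      push_cast; field_simp
    rw [he, Complex.exp_int_mul_two_pi_mul_I]
  · rw [if_neg h]
    set r := Complex.exp ((j : ℂ) * (2 * Real.pi * I) / L) with hr
    have hterm : ∀ n : ℕ, Complex.exp (((j : ℂ) * n) * (2 * Real.pi * I) / L) = r ^ n := by
      intro n
      rw [hr, ← Complex.exp_nat_mul]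
      ring_nf
    have hr1 : r ≠ 1 := by
      rw [hr, Ne, Complex.exp_eq_one_iff]
      rintro ⟨t, ht⟩
      apply h ⟨t, ?_⟩
      have h2 : (j : ℂ) = L * t := by
        field_simp at ht
        have h3 : (j : ℂ) * (2 * Real.pi * I) = ((L : ℂ) * t) * (2 * Real.pi * I) := by
          rw [ht]
        exact mul_right_cancel₀ Complex.two_pi_I_ne_zero h3
      exact_mod_cast h2
    rw [Finset.sum_congr rfl (fun n _ => hterm n), geom_sum_eq hr1]
    have hL1 : r ^ L = 1 := by
      rw [hr, ← Complex.exp_nat_mul]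
      have he : (L : ℂ) * ((j : ℂ) * (2 * Real.pi * I) / L) = (j : ℂ) * (2 * Real.pi * I) := by
        field_simp
      rw [he]
      exact Complex.exp_int_mul_two_pi_mul_I j
    simp [hL1]

private lemma icc_shift' (K : ℕ) (f : ℤ → ℂ) :
    ∑ k ∈ Finset.Icc (-(K:ℤ)) (K:ℤ), f k = ∑ n ∈ Finset.range (2*K+1), f ((n : ℤ) - K) := by
  refine Finset.sum_nbij' (fun k => (k + K).toNat) (fun n => (n : ℤ) - K) ?_ ?_ ?_ ?_ ?_
  · intro a ha; simp only [Finset.mem_Icc] at ha; simp only [Finset.mem_range]; omega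
  · intro a ha; simp only [Finset.mem_range] at ha; simp only [Finset.mem_Icc]; omega
  · intro a ha; simp only [Finset.mem_Icc] at ha; omega
  · intro a ha; simp only [Finset.mem_range] at ha; omega
  · intro a ha; simp only [Finset.mem_Icc] at ha
    congr 1; omega

private lemma icc_exp' (K N : ℕ) (hKN : N = 2*K+1) (d : ℤ) (hd : d.natAbs ≤ 2*K) :
    ∑ k ∈ Finset.Icc (-(K:ℤ)) (K:ℤ),
        Complex.exp ((k : ℂ) * (d : ℂ) * (2 * Real.pi * I) / (N : ℂ)) =
      if d = 0 then (N : ℂ) else 0 := by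
  subst hKN
  rw [icc_shift' K (fun k => Complex.exp ((k : ℂ) * d * (2 * Real.pi * I) / ((2*K+1 : ℕ) : ℂ)))]
  have hsplit : ∀ n : ℕ,
      Complex.exp ((((n:ℤ) - K : ℤ) : ℂ) * d * (2 * Real.pi * I) / ((2*K+1:ℕ):ℂ))
      = Complex.exp (((-(K:ℤ)*d : ℤ) : ℂ) * (2 * Real.pi * I) / ((2*K+1:ℕ):ℂ)) *
        Complex.exp (((d : ℂ) * n) * (2 * Real.pi * I) / ((2*K+1:ℕ):ℂ)) := by
    intro n
    rw [← Complex.exp_add]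
    congr 1
    push_cast
    ring
  simp only [hsplit]
  rw [← Finset.mul_sum]
  have hg := geom_exp' (2*K+1) (by omega) d
  push_cast at hg ⊢
  rw [hg]
  by_cases h0 : d = 0
  · subst h0
    simp
  · rw [if_neg h0, if_neg, mul_zero]
    intro hdvd
    exact h0 (Int.eq_zero_of_abs_lt_dvd hdvd (by rw [Int.abs_eq_natAbs]; omega))

/-- Summation (orthogonality) rule for the interpolation matrix `F^{(M)}`:
`(a/M) ∑_{n=0}^{MN-1} F_{n m₁} F_{n m₂} = (1/a) δ_{m₁ m₂}`. The kernel is the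
real truncated Fourier sum
`F_{nm} = (1/(aN)) ∑_{|k| ≤ (N-1)/2} cos(2πk(m - n/M)/N)`. -/
theorem stmt_13 (N M : ℕ) (hN : Odd N) (hNpos : 0 < N) (hM : 2 ≤ M)
    (a : ℝ) (ha : 0 < a)
    (F : ℕ → ℕ → ℝ)
    (hF : ∀ n m, F n m = (1 / (a * N)) *
      ∑ k ∈ Finset.Icc (-(((N : ℤ) - 1) / 2)) (((N : ℤ) - 1) / 2),
        Real.cos (2 * Real.pi * k * ((m : ℝ) - (n : ℝ) / M) / N))
    (m₁ m₂ : ℕ) (hm₁ : m₁ < N) (hm₂ : m₂ < N) :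
    (a / M) * ∑ n ∈ Finset.range (M * N), F n m₁ * F n m₂ =
      if m₁ = m₂ then 1 / a else 0 := by
  obtain ⟨K, hK⟩ := hN
  have hKZ : -(((N : ℤ) - 1) / 2) = -(K : ℤ) ∧ ((N : ℤ) - 1) / 2 = (K : ℤ) := by
    constructor <;> omega
  have hM0 : (M : ℂ) ≠ 0 := Nat.cast_ne_zero.2 (by omega)
  have hN0 : (N : ℂ) ≠ 0 := Nat.cast_ne_zero.2 (by omega)
  have ha0 : (a : ℂ) ≠ 0 := by exact_mod_cast ha.ne'
  -- the complex exponential form of F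
  set G : ℕ → ℕ → ℂ := fun n m => ∑ k ∈ Finset.Icc (-(K:ℤ)) (K:ℤ),
      Complex.exp ((k : ℂ) * ((M:ℂ)*m - n) * (2 * Real.pi * I) / ((M:ℂ)*(N:ℂ))) with hG
  have hFC : ∀ n m : ℕ, ((F n m : ℝ) : ℂ) = (1 / ((a : ℂ) * N)) * G n m := by
    intro n m
    rw [hF n m, hG]
    rw [hKZ.1, hKZ.2]
    push_cast
    congr 1
    have hz : ∀ k : ℤ, (2 * (Real.pi:ℂ) * (k:ℤ) * ((m : ℂ) - (n : ℂ) / M) / N) * I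
        = (k : ℂ) * ((M:ℂ)*m - n) * (2 * Real.pi * I) / ((M:ℂ)*(N:ℂ)) := by
      intro k; field_simp
    calc ∑ k ∈ Finset.Icc (-(K:ℤ)) (K:ℤ),
            Complex.cos (2 * (Real.pi:ℂ) * (k:ℤ) * ((m : ℂ) - (n : ℂ) / M) / N)
        = ∑ k ∈ Finset.Icc (-(K:ℤ)) (K:ℤ),
            (Complex.exp ((k : ℂ) * ((M:ℂ)*m - n) * (2 * Real.pi * I) / ((M:ℂ)*(N:ℂ)))
             + Complex.exp ((-k : ℤ) * ((M:ℂ)*m - n) * (2 * Real.pi * I) / ((M:ℂ)*(N:ℂ)))) / 2 := by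
          refine Finset.sum_congr rfl fun k _ => ?_
          show (Complex.exp (_ * I) + Complex.exp (-_ * I)) / 2 = _
          congr 2
          · exact congrArg Complex.exp (hz k)
          · refine congrArg Complex.exp ?_
            push_cast
            field_simp
      _ = _ := by
          simp only [add_div, Finset.sum_add_distrib]
          rw [sum_neg_icc' (K:ℤ) (fun k => Complex.exp ((k : ℂ) * ((M:ℂ)*m - n)
            * (2 * Real.pi * I) / ((M:ℂ)*(N:ℂ))) / 2)]
          rw [← Finset.sum_add_distrib]
          refine Finset.sum_congr rfl fun k _ => by ring
  -- the key orthogonality computation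
  have hS : ∑ n ∈ Finset.range (M*N), G n m₁ * G n m₂
      = ((M*N : ℕ) : ℂ) * (if ((m₁ : ℤ) - m₂) = 0 then (N : ℂ) else 0) := by
    calc ∑ n ∈ Finset.range (M*N), G n m₁ * G n m₂
        = ∑ n ∈ Finset.range (M*N), ∑ k₁ ∈ Finset.Icc (-(K:ℤ)) (K:ℤ),
            ∑ k₂ ∈ Finset.Icc (-(K:ℤ)) (K:ℤ),
            Complex.exp ((k₁ : ℂ) * ((M:ℂ)*m₁ - n) * (2 * Real.pi * I) / ((M:ℂ)*(N:ℂ))) *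
            Complex.exp ((k₂ : ℂ) * ((M:ℂ)*m₂ - n) * (2 * Real.pi * I) / ((M:ℂ)*(N:ℂ))) := by
          exact Finset.sum_congr rfl fun n _ => Finset.sum_mul_sum _ _ _ _
      _ = ∑ k₁ ∈ Finset.Icc (-(K:ℤ)) (K:ℤ), ∑ k₂ ∈ Finset.Icc (-(K:ℤ)) (K:ℤ),
            ∑ n ∈ Finset.range (M*N),
            Complex.exp ((k₁ : ℂ) * ((M:ℂ)*m₁ - n) * (2 * Real.pi * I) / ((M:ℂ)*(N:ℂ))) *
            Complex.exp ((k₂ : ℂ) * ((M:ℂ)*m₂ - n) * (2 * Real.pi * I) / ((M:ℂ)*(N:ℂ))) := by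
          rw [Finset.sum_comm]
          exact Finset.sum_congr rfl fun k₁ _ => Finset.sum_comm
      _ = ∑ k₁ ∈ Finset.Icc (-(K:ℤ)) (K:ℤ), ∑ k₂ ∈ Finset.Icc (-(K:ℤ)) (K:ℤ),
            Complex.exp (((M:ℂ) * (k₁*m₁ + k₂*m₂)) * (2 * Real.pi * I) / ((M:ℂ)*(N:ℂ))) *
            ∑ n ∈ Finset.range (M*N),
              Complex.exp (((-(k₁+k₂) : ℤ) : ℂ) * (n : ℕ) * (2 * Real.pi * I) / ((M*N : ℕ) : ℂ)) := by
          refine Finset.sum_congr rfl fun k₁ _ => Finset.sum_congr rfl fun k₂ _ => ?_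
          rw [Finset.mul_sum]
          refine Finset.sum_congr rfl fun n _ => ?_
          rw [← Complex.exp_add, ← Complex.exp_add]
          refine congrArg Complex.exp ?_
          push_cast
          field_simp
          ring
      _ = ∑ k₁ ∈ Finset.Icc (-(K:ℤ)) (K:ℤ), ∑ k₂ ∈ Finset.Icc (-(K:ℤ)) (K:ℤ),
            (if k₂ = -k₁ then
              Complex.exp (((M:ℂ) * (k₁*m₁ + k₂*m₂)) * (2 * Real.pi * I) / ((M:ℂ)*(N:ℂ)))
                * ((M*N : ℕ) : ℂ) else 0) := by
          refine Finset.sum_congr rfl fun k₁ hk₁ => Finset.sum_congr rfl fun k₂ hk₂ => ?_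
          rw [geom_exp' (M*N) (by positivity) (-(k₁+k₂))]
          simp only [Finset.mem_Icc] at hk₁ hk₂
          by_cases he : k₂ = -k₁
          · rw [if_pos he, if_pos (by rw [he]; simp)]
          · rw [if_neg he, if_neg, mul_zero]
            intro hdvd
            have h0 : -(k₁+k₂) = 0 := by
              refine Int.eq_zero_of_abs_lt_dvd hdvd ?_
              have : |(-(k₁+k₂))| ≤ 2*K := by rw [abs_le]; omega
              have hMN : (N : ℤ) ≤ (M*N : ℕ) := by
                have h1 : N ≤ M*N := Nat.le_mul_of_pos_left N (by omega)
                exact_mod_cast h1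
              omega
            exact he (by omega)
      _ = ∑ k₁ ∈ Finset.Icc (-(K:ℤ)) (K:ℤ),
            Complex.exp ((k₁ : ℂ) * (((m₁:ℤ) - m₂ : ℤ) : ℂ) * (2 * Real.pi * I) / (N : ℂ))
              * ((M*N : ℕ) : ℂ) := by
          refine Finset.sum_congr rfl fun k₁ hk₁ => ?_
          rw [Finset.sum_ite_eq' (Finset.Icc (-(K:ℤ)) (K:ℤ)) (-k₁)
            (fun k₂ => Complex.exp (((M:ℂ) * (k₁*m₁ + k₂*m₂)) * (2 * Real.pi * I) / ((M:ℂ)*(N:ℂ)))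
              * ((M*N : ℕ) : ℂ))]
          simp only [Finset.mem_Icc] at hk₁
          rw [if_pos (Finset.mem_Icc.2 (by omega))]
          congr 2
          push_cast
          field_simp
          ring
      _ = ((M*N : ℕ) : ℂ) * (if ((m₁ : ℤ) - m₂) = 0 then (N : ℂ) else 0) := by
          rw [← Finset.sum_mul, icc_exp' K N hK ((m₁ : ℤ) - m₂) (by omega), mul_comm]
  -- conclude
  have hC : ((a : ℂ)/M) * ∑ n ∈ Finset.range (M*N), ((F n m₁ : ℝ) : ℂ) * ((F n m₂ : ℝ) : ℂ)
      = if m₁ = m₂ then 1/(a : ℂ) else 0 := by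
    have : ∑ n ∈ Finset.range (M*N), ((F n m₁ : ℝ) : ℂ) * ((F n m₂ : ℝ) : ℂ)
        = (1 / ((a : ℂ) * N))^2 * ∑ n ∈ Finset.range (M*N), G n m₁ * G n m₂ := by
      rw [Finset.mul_sum]
      refine Finset.sum_congr rfl fun n _ => ?_
      rw [hFC n m₁, hFC n m₂]
      ring
    rw [this, hS]
    by_cases he : m₁ = m₂
    · rw [if_pos (by omega : ((m₁ : ℤ) - m₂) = 0), if_pos he]
      push_cast
      field_simp
    · rw [if_neg (by omega : ¬((m₁ : ℤ) - m₂) = 0), if_neg he]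
      ring
  by_cases he : m₁ = m₂
  · rw [if_pos he]
    rw [if_pos he] at hC
    exact_mod_cast hC
  · rw [if_neg he]
    rw [if_neg he] at hC
    exact_mod_cast hC
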